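/- arXiv:1302.3762 — 7 statements merged into one kernel-verified Lean document; each statement's English description precedes it below -/
import Mathlib

section
/- Let M be a symmetric real k×k matrix, and let P be an m×k matrix and Q an n×k matrix, and let N_P and N_Q be matrices whose columns span the kernels of P and Q respectively. If there exists an n×m matrix G such that M + Q^T G P + P^T G^T Q is negative definite, then N_P^T M N_P and N_Q^T M N_Q are both negative definite (assuming N_P and N_Q have full column rank). -/
open Matrix

def Matrix.NegDef {n : Type*} [Fintype n] (M : Matrix n n ℝ) : Prop := (-M).PosDef

lemma negdef_conj {k p : ℕ} {S : Matrix (Fin k) (Fin k) ℝ} (hS : S.NegDef)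
    (N : Matrix (Fin k) (Fin p) ℝ) (hinj : Function.Injective N.mulVec) :
    (Nᵀ * S * N).NegDef := by
  obtain ⟨hherm, hpos⟩ := Matrix.posDef_iff_dotProduct_mulVec.mp hS
  have key : ∀ (A : Matrix (Fin k) (Fin k) ℝ) (x : Fin p → ℝ),
      x ⬝ᵥ ((Nᵀ * A * N) *ᵥ x) = (N *ᵥ x) ⬝ᵥ (A *ᵥ (N *ᵥ x)) := by
    intro A x
    rw [← mulVec_mulVec, ← mulVec_mulVec, dotProduct_mulVec, vecMul_transpose,
      mulVec_mulVec]
  have hneg : (-(Nᵀ * S * N)) = Nᵀ * (-S) * N := by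
    simp [Matrix.mul_neg, Matrix.neg_mul]
  refine Matrix.posDef_iff_dotProduct_mulVec.mpr ⟨?_, ?_⟩
  · rw [hneg]
    have := Matrix.isHermitian_conjTranspose_mul_mul N hherm
    simpa using this
  · intro x hx
    have hNx : N *ᵥ x ≠ 0 := fun h => hx (hinj (by simpa using h))
    have h := hpos (x := N *ᵥ x) hNx
    simp only [star_trivial] at h ⊢
    rw [hneg, key]
    exact h

theorem stmt1 {k m n p q : ℕ} (M : Matrix (Fin k) (Fin k) ℝ) (hM : M.IsSymm)
    (P : Matrix (Fin m) (Fin k) ℝ) (Q : Matrix (Fin n) (Fin k) ℝ)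
    (NP : Matrix (Fin k) (Fin p) ℝ) (NQ : Matrix (Fin k) (Fin q) ℝ)
    (hPNP : P * NP = 0) (hNPinj : Function.Injective NP.mulVec)
    (hNPspan : ∀ v : Fin k → ℝ, P.mulVec v = 0 → ∃ u, NP.mulVec u = v)
    (hQNQ : Q * NQ = 0) (hNQinj : Function.Injective NQ.mulVec)
    (hNQspan : ∀ v : Fin k → ℝ, Q.mulVec v = 0 → ∃ u, NQ.mulVec u = v)
    (hG : ∃ G : Matrix (Fin n) (Fin m) ℝ, (M + Qᵀ * G * P + Pᵀ * Gᵀ * Q).NegDef) :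
    (NPᵀ * M * NP).NegDef ∧ (NQᵀ * M * NQ).NegDef := by
  obtain ⟨G, hS⟩ := hG
  have hNPT : NPᵀ * Pᵀ = 0 := by rw [← transpose_mul, hPNP, transpose_zero]
  have hNQT : NQᵀ * Qᵀ = 0 := by rw [← transpose_mul, hQNQ, transpose_zero]
  constructor
  · have e1 : NPᵀ * (Qᵀ * G * P) * NP = 0 := by
      rw [Matrix.mul_assoc NPᵀ _ NP, Matrix.mul_assoc (Qᵀ * G) P NP, hPNP,
        Matrix.mul_zero, Matrix.mul_zero]
    have e2 : NPᵀ * (Pᵀ * Gᵀ * Q) * NP = 0 := by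
      rw [← Matrix.mul_assoc NPᵀ (Pᵀ * Gᵀ) Q, ← Matrix.mul_assoc NPᵀ Pᵀ Gᵀ, hNPT,
        Matrix.zero_mul, Matrix.zero_mul, Matrix.zero_mul]
    have h1 : NPᵀ * (M + Qᵀ * G * P + Pᵀ * Gᵀ * Q) * NP = NPᵀ * M * NP := by
      rw [Matrix.mul_add, Matrix.mul_add, Matrix.add_mul, Matrix.add_mul, e1, e2,
        add_zero, add_zero]
    have := negdef_conj hS NP hNPinj
    rwa [h1] at this
  · have e1 : NQᵀ * (Pᵀ * Gᵀ * Q) * NQ = 0 := by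
      rw [Matrix.mul_assoc NQᵀ _ NQ, Matrix.mul_assoc (Pᵀ * Gᵀ) Q NQ, hQNQ,
        Matrix.mul_zero, Matrix.mul_zero]
    have e2 : NQᵀ * (Qᵀ * G * P) * NQ = 0 := by
      rw [← Matrix.mul_assoc NQᵀ (Qᵀ * G) P, ← Matrix.mul_assoc NQᵀ Qᵀ G, hNQT,
        Matrix.zero_mul, Matrix.zero_mul, Matrix.zero_mul]
    have h1 : NQᵀ * (M + Qᵀ * G * P + Pᵀ * Gᵀ * Q) * NQ = NQᵀ * M * NQ := by
      rw [Matrix.mul_add, Matrix.mul_add, Matrix.add_mul, Matrix.add_mul, e1, e2,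
        add_zero, add_zero]
    have := negdef_conj hS NQ hNQinj
    rwa [h1] at this
end

section
/- (Constraint LMI) Let P be a symmetric positive definite n×n real matrix with Q = P^{-1}, K an m×n real matrix, and u, w positive reals. If the block matrix [[-Q, -Q K^T], [-K Q, -(u²/w²) I_m]] is negative definite, then for every x ∈ ℝ^n with x^T P x ≤ w², the Euclidean norm of K x satisfies ‖K x‖² ≤ u². -/
open Matrix

theorem stmt9 {n m : ℕ} (P : Matrix (Fin n) (Fin n) ℝ) (hP : P.PosDef) (hPs : P.IsSymm)
    (Q : Matrix (Fin n) (Fin n) ℝ) (hQ : Q = P⁻¹)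
    (K : Matrix (Fin m) (Fin n) ℝ) (u w : ℝ) (hu : 0 < u) (hw : 0 < w)
    (hLMI : (Matrix.fromBlocks (-Q) (-(Q * Kᵀ)) (-(K * Q))
        ((-(u ^ 2 / w ^ 2)) • (1 : Matrix (Fin m) (Fin m) ℝ))).NegDef) :
    ∀ x : Fin n → ℝ, x ⬝ᵥ P.mulVec x ≤ w ^ 2 →
      (K.mulVec x) ⬝ᵥ (K.mulVec x) ≤ u ^ 2 := by
  intro x hx
  set c : ℝ := u ^ 2 / w ^ 2 with hc
  have hc0 : 0 < c := div_pos (pow_pos hu 2) (pow_pos hw 2)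
  by_cases hKx : K.mulVec x = 0
  · rw [hKx]; simp; positivity
  -- P invertible facts
  have hdet : IsUnit P.det := isUnit_iff_ne_zero.mpr (ne_of_gt hP.det_pos)
  have hQP : Q * P = 1 := by rw [hQ]; exact Matrix.nonsing_inv_mul P hdet
  have hPQ : P * Q = 1 := by rw [hQ]; exact Matrix.mul_nonsing_inv P hdet
  -- the positive-definite block matrix
  have hM : (Matrix.fromBlocks Q (Q * Kᵀ) (K * Q)
      (c • (1 : Matrix (Fin m) (Fin m) ℝ))).PosDef := by
    have := hLMI
    unfold Matrix.NegDef at this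
    convert this using 1
    simp [Matrix.fromBlocks_neg, neg_smul]
  set a : Fin n → ℝ := -(P.mulVec x) with ha
  set b : Fin m → ℝ := c⁻¹ • K.mulVec x with hb
  have hv : Sum.elim a b ≠ 0 := by
    intro h
    apply hKx
    funext j
    have := congrFun h (Sum.inr j)
    simp [hb] at this
    rcases this with h' | h'
    · exact absurd h' hc0.ne'
    · exact h'
  have hpos := hM.dotProduct_mulVec_pos hv
  simp only [star_trivial] at hpos
  rw [Matrix.fromBlocks_mulVec, sumElim_dotProduct_sumElim] at hpos
  set s : ℝ := (K.mulVec x) ⬝ᵥ (K.mulVec x) with hs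
  -- helper: (P *ᵥ x) ⬝ᵥ z = x ⬝ᵥ (P *ᵥ z)
  have hPdot : ∀ z : Fin n → ℝ, (P *ᵥ x) ⬝ᵥ z = x ⬝ᵥ (P *ᵥ z) := by
    intro z
    conv_lhs => rw [show P = Pᵀ from hPs.symm, Matrix.mulVec_transpose]
    rw [← Matrix.dotProduct_mulVec]
  have key1 : a ⬝ᵥ (Q *ᵥ a) = x ⬝ᵥ P *ᵥ x := by
    rw [ha]
    simp only [Matrix.mulVec_neg, neg_dotProduct, dotProduct_neg, neg_neg,
      Matrix.mulVec_mulVec]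
    rw [hQP, Matrix.one_mulVec, hPdot]
  have hKQKx : (Q * Kᵀ) *ᵥ (K *ᵥ x) = (Q * Kᵀ * K) *ᵥ x := by
    rw [Matrix.mulVec_mulVec]
  have key2 : a ⬝ᵥ ((Q * Kᵀ) *ᵥ b) = -(c⁻¹ * s) := by
    rw [ha, hb, Matrix.mulVec_smul, dotProduct_smul, neg_dotProduct, hKQKx,
      hPdot, Matrix.mulVec_mulVec]
    have : P * (Q * Kᵀ * K) = Kᵀ * K := by
      rw [Matrix.mul_assoc Q, ← Matrix.mul_assoc P, hPQ, Matrix.one_mul]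
    rw [this, ← Matrix.mulVec_mulVec, hs]
    have : x ⬝ᵥ (Kᵀ *ᵥ (K *ᵥ x)) = (K *ᵥ x) ⬝ᵥ (K *ᵥ x) := by
      rw [Matrix.mulVec_transpose, dotProduct_comm, Matrix.dotProduct_mulVec]
    rw [this, smul_neg, smul_eq_mul]
  have key3 : b ⬝ᵥ ((K * Q) *ᵥ a) = -(c⁻¹ * s) := by
    rw [ha, hb, Matrix.mulVec_neg, Matrix.mulVec_mulVec]
    have : K * Q * P = K := by rw [Matrix.mul_assoc, hQP, Matrix.mul_one]
    rw [smul_dotProduct, dotProduct_neg, this, smul_neg, smul_eq_mul]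
  have key4 : b ⬝ᵥ ((c • (1 : Matrix (Fin m) (Fin m) ℝ)) *ᵥ b) = c⁻¹ * s := by
    rw [hb, Matrix.smul_mulVec, Matrix.one_mulVec]
    simp only [dotProduct_smul, smul_dotProduct, smul_eq_mul]
    rw [hs]
    field_simp
  have hcl : (a ⊕ᵥ b) ∘ Sum.inl = a := Sum.elim_comp_inl a b
  have hcr : (a ⊕ᵥ b) ∘ Sum.inr = b := Sum.elim_comp_inr a b
  rw [hcl, hcr, dotProduct_add, dotProduct_add, key1, key2, key3, key4] at hpos
  have hxx : c⁻¹ * s < x ⬝ᵥ P *ᵥ x := by linarith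
  have hcw : c * w ^ 2 = u ^ 2 := by rw [hc]; field_simp
  nlinarith [mul_lt_mul_of_pos_left hxx hc0, mul_le_mul_of_nonneg_left hx hc0.le,
    mul_inv_cancel₀ hc0.ne']
end

section
/- (Bounded real dissipation, algebraic form) Let A_cl, B_cl, C_cl, D_cl be real matrices of compatible sizes, Q a symmetric positive definite n×n matrix, and γ > 0. If the block matrix [[A_cl Q + Q A_cl^T, B_cl, Q C_cl^T], [B_cl^T, -γ I, D_cl^T], [C_cl Q, D_cl, -γ I]] is negative definite, then with P = Q^{-1}, for all x ∈ ℝ^n and w ∈ ℝ^m with (x, w) ≠ 0: 2 x^T P (A_cl x + B_cl w) + γ^{-1} ‖C_cl x + D_cl w‖² - γ ‖w‖² < 0. -/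
open Matrix

theorem stmt10 {n m p : ℕ} (Acl : Matrix (Fin n) (Fin n) ℝ) (Bcl : Matrix (Fin n) (Fin m) ℝ)
    (Ccl : Matrix (Fin p) (Fin n) ℝ) (Dcl : Matrix (Fin p) (Fin m) ℝ)
    (Q : Matrix (Fin n) (Fin n) ℝ) (hQ : Q.PosDef) (hQs : Q.IsSymm) (γ : ℝ) (hγ : 0 < γ)
    (hLMI : (Matrix.fromBlocks
        (Matrix.fromBlocks (Acl * Q + Q * Aclᵀ) Bcl Bclᵀ
          ((-γ) • (1 : Matrix (Fin m) (Fin m) ℝ)))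
        (Matrix.fromRows (Q * Cclᵀ) Dclᵀ)
        (Matrix.fromCols (Ccl * Q) Dcl)
        ((-γ) • (1 : Matrix (Fin p) (Fin p) ℝ))).NegDef) :
    ∀ (x : Fin n → ℝ) (w : Fin m → ℝ), ¬(x = 0 ∧ w = 0) →
      2 * (x ⬝ᵥ Q⁻¹.mulVec (Acl.mulVec x + Bcl.mulVec w))
        + γ⁻¹ * ((Ccl.mulVec x + Dcl.mulVec w) ⬝ᵥ (Ccl.mulVec x + Dcl.mulVec w))
        - γ * (w ⬝ᵥ w) < 0 := by
  intro x w hxw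
  have hQinv : IsUnit Q.det := isUnit_iff_ne_zero.2 (ne_of_gt hQ.det_pos)
  set y := Q⁻¹.mulVec x with hy
  have hQy : Q.mulVec y = x := by
    rw [hy, Matrix.mulVec_mulVec, Matrix.mul_nonsing_inv Q hQinv, Matrix.one_mulVec]
  set z := γ⁻¹ • (Ccl.mulVec x + Dcl.mulVec w) with hz
  set v : (Fin n ⊕ Fin m) ⊕ Fin p → ℝ := Sum.elim (Sum.elim y w) z with hv
  have hvne : v ≠ 0 := by
    intro h
    have hy0 : y = 0 := by
      funext i; have := congrFun h (Sum.inl (Sum.inl i)); simpa [hv] using this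
    have hw0 : w = 0 := by
      funext i; have := congrFun h (Sum.inl (Sum.inr i)); simpa [hv] using this
    have hx0 : x = 0 := by rw [← hQy, hy0, Matrix.mulVec_zero]
    exact hxw ⟨hx0, hw0⟩
  have key := Matrix.PosDef.dotProduct_mulVec_pos hLMI hvne
  rw [Matrix.neg_mulVec, dotProduct_neg] at key
  have key' : v ⬝ᵥ (Matrix.fromBlocks
        (Matrix.fromBlocks (Acl * Q + Q * Aclᵀ) Bcl Bclᵀ
          ((-γ) • (1 : Matrix (Fin m) (Fin m) ℝ)))
        (Matrix.fromRows (Q * Cclᵀ) Dclᵀ)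
        (Matrix.fromCols (Ccl * Q) Dcl)
        ((-γ) • (1 : Matrix (Fin p) (Fin p) ℝ))).mulVec v < 0 := by
    simpa using key
  have expand : v ⬝ᵥ (Matrix.fromBlocks
        (Matrix.fromBlocks (Acl * Q + Q * Aclᵀ) Bcl Bclᵀ
          ((-γ) • (1 : Matrix (Fin m) (Fin m) ℝ)))
        (Matrix.fromRows (Q * Cclᵀ) Dclᵀ)
        (Matrix.fromCols (Ccl * Q) Dcl)
        ((-γ) • (1 : Matrix (Fin p) (Fin p) ℝ))).mulVec v
      = 2 * (x ⬝ᵥ Q⁻¹.mulVec (Acl.mulVec x + Bcl.mulVec w))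
        + γ⁻¹ * ((Ccl.mulVec x + Dcl.mulVec w) ⬝ᵥ (Ccl.mulVec x + Dcl.mulVec w))
        - γ * (w ⬝ᵥ w) := by
    have h1 : y ⬝ᵥ (Acl * Q).mulVec y = y ⬝ᵥ Acl.mulVec x := by
      rw [← Matrix.mulVec_mulVec, hQy]
    have h2 : y ⬝ᵥ (Q * Aclᵀ).mulVec y = y ⬝ᵥ Acl.mulVec x := by
      rw [← Matrix.mulVec_mulVec, Matrix.dotProduct_mulVec y Q,
        ← Matrix.mulVec_transpose, hQs.eq, hQy, Matrix.dotProduct_mulVec,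
        Matrix.vecMul_transpose, dotProduct_comm]
    have h3 : w ⬝ᵥ Bclᵀ.mulVec y = y ⬝ᵥ Bcl.mulVec w := by
      rw [Matrix.mulVec_transpose, Matrix.dotProduct_mulVec, dotProduct_comm]
    have h4 : y ⬝ᵥ (Q * Cclᵀ).mulVec z = (Ccl.mulVec x) ⬝ᵥ z := by
      rw [← Matrix.mulVec_mulVec, Matrix.dotProduct_mulVec y Q, ← Matrix.mulVec_transpose,
        hQs.eq, hQy, Matrix.dotProduct_mulVec, Matrix.vecMul_transpose]
    have h5 : w ⬝ᵥ Dclᵀ.mulVec z = (Dcl.mulVec w) ⬝ᵥ z := by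
      rw [Matrix.dotProduct_mulVec, Matrix.vecMul_transpose]
    have h6 : z ⬝ᵥ (Ccl * Q).mulVec y = z ⬝ᵥ Ccl.mulVec x := by
      rw [← Matrix.mulVec_mulVec, hQy]
    have hxy : x ⬝ᵥ Q⁻¹.mulVec (Acl.mulVec x + Bcl.mulVec w)
        = y ⬝ᵥ Acl.mulVec x + y ⬝ᵥ Bcl.mulVec w := by
      rw [Matrix.dotProduct_mulVec x Q⁻¹, ← Matrix.mulVec_transpose,
        Matrix.transpose_nonsing_inv, hQs.eq, ← hy, dotProduct_add]
    have hzz : z ⬝ᵥ ((Ccl.mulVec x + Dcl.mulVec w))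
        = γ⁻¹ * ((Ccl.mulVec x + Dcl.mulVec w) ⬝ᵥ (Ccl.mulVec x + Dcl.mulVec w)) := by
      rw [hz, smul_dotProduct]; simp [smul_eq_mul]
    simp only [hv, Matrix.fromBlocks_mulVec, Matrix.fromRows_mulVec,
      Matrix.fromCols_mulVec_sumElim, sumElim_dotProduct_sumElim,
      Matrix.add_mulVec, dotProduct_add, Matrix.smul_mulVec, Matrix.one_mulVec,
      dotProduct_smul, smul_eq_mul, Sum.elim_comp_inl, Sum.elim_comp_inr]
    have hzc : z ⬝ᵥ Ccl.mulVec x + z ⬝ᵥ Dcl.mulVec w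
        = γ⁻¹ * ((Ccl.mulVec x + Dcl.mulVec w) ⬝ᵥ (Ccl.mulVec x + Dcl.mulVec w)) := by
      rw [← dotProduct_add, hzz]
    have hzz2 : z ⬝ᵥ z = γ⁻¹ * (γ⁻¹ * ((Ccl.mulVec x + Dcl.mulVec w) ⬝ᵥ (Ccl.mulVec x + Dcl.mulVec w))) := by
      rw [hz]; simp [smul_dotProduct, dotProduct_smul, smul_eq_mul]; ring
    have h4' : (Ccl.mulVec x) ⬝ᵥ z = z ⬝ᵥ Ccl.mulVec x := dotProduct_comm _ _
    have h5' : (Dcl.mulVec w) ⬝ᵥ z = z ⬝ᵥ Dcl.mulVec w := dotProduct_comm _ _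
    rw [h1, h2, h3, h4, h5, h6, hxy, h4', h5', hzc, hzz2, ← dotProduct_add]
    have hγ0 : γ ≠ 0 := ne_of_gt hγ
    simp only [dotProduct_add]
    field_simp
    ring
  linarith [expand ▸ key']
end

section
/- (Forward direction of Theorem 1, reduction step) Let A_cl be n×n, B_cl n×m, C_cl p×n, D_cl p×m real matrices, X₁ symmetric positive definite, G₁ an n×n real matrix, γ > 0, and 0 < ε₁ < 1. Define P = [I, 0, 0, -2ε₁ I] (n×(n+m+p+n)) and Q = [A_cl^T - (1/2)I, 0, C_cl^T, I]. Let M be the symmetric block matrix [[X₁, B_cl, 0, -X₁], [B_cl^T, -γI, D_cl^T, 0], [0, D_cl, -γI, 0], [-X₁, 0, 0, 0]]. If M + Q^T G₁ P + P^T G₁^T Q is negative definite, then [[A_cl X₁ + X₁ A_cl^T, B_cl, X₁ C_cl^T], [B_cl^T, -γI, D_cl^T], [C_cl X₁, D_cl, -γI]] is negative definite. -/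
open Matrix

theorem stmt11 {n m p : ℕ} (Acl : Matrix (Fin n) (Fin n) ℝ) (Bcl : Matrix (Fin n) (Fin m) ℝ)
    (Ccl : Matrix (Fin p) (Fin n) ℝ) (Dcl : Matrix (Fin p) (Fin m) ℝ)
    (X₁ : Matrix (Fin n) (Fin n) ℝ) (hX₁ : X₁.PosDef) (hX₁s : X₁.IsSymm)
    (G₁ : Matrix (Fin n) (Fin n) ℝ) (γ : ℝ) (hγ : 0 < γ)
    (ε₁ : ℝ) (hε₁ : 0 < ε₁) (hε₁' : ε₁ < 1)
    (P : Matrix (Fin n) (((Fin n ⊕ Fin m) ⊕ Fin p) ⊕ Fin n) ℝ)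
    (hP : P = Matrix.fromCols
      (Matrix.fromCols (Matrix.fromCols (1 : Matrix (Fin n) (Fin n) ℝ) 0) 0)
      ((-(2 * ε₁)) • (1 : Matrix (Fin n) (Fin n) ℝ)))
    (Q : Matrix (Fin n) (((Fin n ⊕ Fin m) ⊕ Fin p) ⊕ Fin n) ℝ)
    (hQ : Q = Matrix.fromCols
      (Matrix.fromCols (Matrix.fromCols (Aclᵀ - (1 / 2 : ℝ) • 1) 0) Cclᵀ)
      (1 : Matrix (Fin n) (Fin n) ℝ))
    (M : Matrix ((((Fin n ⊕ Fin m) ⊕ Fin p) ⊕ Fin n)) ((((Fin n ⊕ Fin m) ⊕ Fin p) ⊕ Fin n)) ℝ)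
    (hM : M = Matrix.fromBlocks
      (Matrix.fromBlocks
        (Matrix.fromBlocks X₁ Bcl Bclᵀ ((-γ) • (1 : Matrix (Fin m) (Fin m) ℝ)))
        (Matrix.fromRows 0 Dclᵀ)
        (Matrix.fromCols 0 Dcl)
        ((-γ) • (1 : Matrix (Fin p) (Fin p) ℝ)))
      (Matrix.fromRows (Matrix.fromRows (-X₁) 0) 0)
      (Matrix.fromCols (Matrix.fromCols (-X₁) 0) 0)
      0)
    (hDil : (M + Qᵀ * G₁ * P + Pᵀ * G₁ᵀ * Q).NegDef) :
    (Matrix.fromBlocks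
      (Matrix.fromBlocks (Acl * X₁ + X₁ * Aclᵀ) Bcl Bclᵀ
        ((-γ) • (1 : Matrix (Fin m) (Fin m) ℝ)))
      (Matrix.fromRows (X₁ * Cclᵀ) Dclᵀ)
      (Matrix.fromCols (Ccl * X₁) Dcl)
      ((-γ) • (1 : Matrix (Fin p) (Fin p) ℝ))).NegDef := by
  -- the transformation matrix
  set R : Matrix (Fin n) ((Fin n ⊕ Fin m) ⊕ Fin p) ℝ :=
    fromCols (fromCols ((1 / 2 : ℝ) • 1 - Aclᵀ) (0 : Matrix (Fin n) (Fin m) ℝ)) (-Cclᵀ)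
      with hR
  set N : Matrix (((Fin n ⊕ Fin m) ⊕ Fin p) ⊕ Fin n) ((Fin n ⊕ Fin m) ⊕ Fin p) ℝ :=
    fromRows (1 : Matrix ((Fin n ⊕ Fin m) ⊕ Fin p) ((Fin n ⊕ Fin m) ⊕ Fin p) ℝ) R with hN
  have hQN : Q * N = 0 := by
    rw [hQ, hN, fromCols_mul_fromRows, Matrix.mul_one, Matrix.one_mul, hR]
    ext i (⟨j|j⟩|j) <;> simp [fromCols] <;> ring
  have hNQ : Nᵀ * Qᵀ = 0 := by
    rw [← transpose_mul, hQN, transpose_zero]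
  have hkey : Nᵀ * (M + Qᵀ * G₁ * P + Pᵀ * G₁ᵀ * Q) * N =
      fromBlocks
        (fromBlocks (Acl * X₁ + X₁ * Aclᵀ) Bcl Bclᵀ ((-γ) • (1 : Matrix (Fin m) (Fin m) ℝ)))
        (fromRows (X₁ * Cclᵀ) Dclᵀ)
        (fromCols (Ccl * X₁) Dcl)
        ((-γ) • (1 : Matrix (Fin p) (Fin p) ℝ)) := by
    have e1 : Nᵀ * (Qᵀ * G₁ * P) * N = 0 := by
      calc Nᵀ * (Qᵀ * G₁ * P) * N = (Nᵀ * Qᵀ) * (G₁ * P * N) := by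
            simp only [Matrix.mul_assoc]
        _ = 0 := by rw [hNQ, Matrix.zero_mul]
    have e2 : Nᵀ * (Pᵀ * G₁ᵀ * Q) * N = 0 := by
      calc Nᵀ * (Pᵀ * G₁ᵀ * Q) * N = (Nᵀ * Pᵀ * G₁ᵀ) * (Q * N) := by
            simp only [Matrix.mul_assoc]
        _ = 0 := by rw [hQN, Matrix.mul_zero]
    simp only [Matrix.mul_add, Matrix.add_mul]
    rw [e1, e2, add_zero, add_zero]
    rw [hM, hN, transpose_fromRows, transpose_one, fromCols_mul_fromBlocks,
      fromCols_mul_fromRows, Matrix.one_mul, Matrix.one_mul, Matrix.mul_zero, add_zero,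
      Matrix.mul_one]
    ext (⟨i|i⟩|i) (⟨j|j⟩|j) <;>
      simp [hR, Matrix.mul_apply, fromCols_apply_inl, fromCols_apply_inr, fromRows_apply_inl,
        fromRows_apply_inr, fromBlocks, Matrix.one_apply,
        Finset.sum_ite_eq, sub_mul, mul_sub, Finset.sum_sub_distrib, Finset.mul_sum,
        Finset.sum_mul, Matrix.add_apply, mul_comm, Finset.sum_add_distrib,
        Finset.sum_ite_eq, Finset.sum_ite_eq'] <;> ring
  have hNv : ∀ x : (Fin n ⊕ Fin m) ⊕ Fin p → ℝ, x ≠ 0 → N *ᵥ x ≠ 0 := by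
    intro x hx h0
    apply hx
    have := congrFun h0
    funext j
    have := this (Sum.inl j)
    simpa [hN, fromRows_apply_inl, mulVec, Matrix.one_apply, dotProduct] using this
  obtain ⟨hherm, hposd⟩ := posDef_iff_dotProduct_mulVec.mp hDil
  refine posDef_iff_dotProduct_mulVec.mpr ⟨?_, ?_⟩
  · have : (-(fromBlocks
        (fromBlocks (Acl * X₁ + X₁ * Aclᵀ) Bcl Bclᵀ ((-γ) • (1 : Matrix (Fin m) (Fin m) ℝ)))
        (fromRows (X₁ * Cclᵀ) Dclᵀ)
        (fromCols (Ccl * X₁) Dcl)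
        ((-γ) • (1 : Matrix (Fin p) (Fin p) ℝ)))) = Nᴴ * (-(M + Qᵀ * G₁ * P + Pᵀ * G₁ᵀ * Q)) * N := by
      rw [Matrix.mul_neg, Matrix.neg_mul]
      rw [show Nᴴ = Nᵀ from rfl, hkey]
    rw [this]
    exact isHermitian_conjTranspose_mul_mul N hherm
  · intro x hx
    have h1 : (-(fromBlocks
        (fromBlocks (Acl * X₁ + X₁ * Aclᵀ) Bcl Bclᵀ ((-γ) • (1 : Matrix (Fin m) (Fin m) ℝ)))
        (fromRows (X₁ * Cclᵀ) Dclᵀ)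
        (fromCols (Ccl * X₁) Dcl)
        ((-γ) • (1 : Matrix (Fin p) (Fin p) ℝ)))) *ᵥ x = Nᵀ *ᵥ ((-(M + Qᵀ * G₁ * P + Pᵀ * G₁ᵀ * Q)) *ᵥ (N *ᵥ x)) := by
      rw [mulVec_mulVec, mulVec_mulVec, Matrix.mul_neg, Matrix.neg_mul, hkey]
    rw [h1, star_trivial, Matrix.dotProduct_mulVec, vecMul_transpose]
    have := hposd (x := N *ᵥ x) (hNv x hx)
    rwa [star_trivial] at this
end

section
/- (Converse direction of Theorem 1, construction) Let A_cl, B_cl, C_cl, D_cl, γ and symmetric positive definite X₁ be such that M₀ = [[A_cl X₁ + X₁ A_cl^T, B_cl, X₁ C_cl^T], [B_cl^T, -γI, D_cl^T], [C_cl X₁, D_cl, -γI]] is negative definite. Then there exists ε̄ > 0 such that for all 0 < ε₁ ≤ ε̄, the dilated matrix inequality M + Q^T G₁ P + P^T G₁^T Q < 0 holds with the choice G₁ = X₁, where M, P, Q are as in Theorem 1 (with parameter ε₁). -/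
open Matrix

-- smallness lemma
lemma aux_sub_smul_posDef {ι : Type*} [Fintype ι] [DecidableEq ι]
    {A S : Matrix ι ι ℝ} (hA : A.PosDef) (hS : S.PosSemidef) :
    ∃ εbar : ℝ, 0 < εbar ∧ ∀ ε : ℝ, 0 < ε → ε ≤ εbar → (A - ε • S).PosDef := by
  have hherm : ∀ ε : ℝ, (A - ε • S).IsHermitian := by
    intro ε
    have : (ε • S).IsHermitian := by
      unfold Matrix.IsHermitian
      rw [Matrix.conjTranspose_smul, hS.1.eq]
      simp
    exact hA.1.sub this
  rcases isEmpty_or_nonempty ι with hι | hι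
  · exact ⟨1, one_pos, fun ε _ _ => Matrix.PosDef.of_dotProduct_mulVec_pos (hherm ε)
      fun x hx => absurd (funext fun i => (IsEmpty.false i).elim) hx⟩
  · have hK : IsCompact (Metric.sphere (0 : ι → ℝ) 1) := isCompact_sphere 0 1
    have hne : (Metric.sphere (0 : ι → ℝ) 1).Nonempty :=
      NormedSpace.sphere_nonempty.mpr zero_le_one
    have hf : Continuous fun x : ι → ℝ => x ⬝ᵥ (A *ᵥ x) :=
      continuous_id.dotProduct (continuous_const.matrix_mulVec continuous_id)
    have hg : Continuous fun x : ι → ℝ => x ⬝ᵥ (S *ᵥ x) :=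
      continuous_id.dotProduct (continuous_const.matrix_mulVec continuous_id)
    obtain ⟨u, hu, hmin⟩ := hK.exists_isMinOn hne hf.continuousOn
    obtain ⟨v, hv, hmax⟩ := hK.exists_isMaxOn hne hg.continuousOn
    have hu0 : u ≠ 0 := by
      intro h
      rw [h] at hu
      simp at hu
    have hc : 0 < u ⬝ᵥ (A *ᵥ u) := by
      have := hA.dotProduct_mulVec_pos hu0
      simpa [star_trivial] using this
    have hKnn : 0 ≤ v ⬝ᵥ (S *ᵥ v) := by
      have := hS.dotProduct_mulVec_nonneg v
      simpa [star_trivial] using this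
    set c := u ⬝ᵥ (A *ᵥ u)
    set K := v ⬝ᵥ (S *ᵥ v)
    refine ⟨c / (K + 1), by positivity, fun ε hε hεb => Matrix.PosDef.of_dotProduct_mulVec_pos (hherm ε) fun x hx => ?_⟩
    have ht : 0 < ‖x‖ := norm_pos_iff.mpr hx
    set t : ℝ := ‖x‖
    have hu' : (t⁻¹ • x) ∈ Metric.sphere (0 : ι → ℝ) 1 := by
      simp only [mem_sphere_iff_norm, sub_zero, norm_smul, norm_inv, norm_norm]
      rw [show ‖t‖ = t by rw [Real.norm_eq_abs]; exact abs_of_pos ht]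
      exact inv_mul_cancel₀ ht.ne'
    have h1 : c ≤ (t⁻¹ • x) ⬝ᵥ (A *ᵥ (t⁻¹ • x)) := hmin hu'
    have h2 : (t⁻¹ • x) ⬝ᵥ (S *ᵥ (t⁻¹ • x)) ≤ K := hmax hu'
    have e1 : (t⁻¹ • x) ⬝ᵥ (A *ᵥ (t⁻¹ • x)) = t⁻¹ * (t⁻¹ * (x ⬝ᵥ (A *ᵥ x))) := by
      simp [Matrix.mulVec_smul, smul_dotProduct, dotProduct_smul, smul_eq_mul]
    have e2 : (t⁻¹ • x) ⬝ᵥ (S *ᵥ (t⁻¹ • x)) = t⁻¹ * (t⁻¹ * (x ⬝ᵥ (S *ᵥ x))) := by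
      simp [Matrix.mulVec_smul, smul_dotProduct, dotProduct_smul, smul_eq_mul]
    have key : 0 < x ⬝ᵥ ((A - ε • S) *ᵥ x) := by
      have hA' : t * t * c ≤ x ⬝ᵥ (A *ᵥ x) := by
        rw [e1] at h1
        have := mul_le_mul_of_nonneg_left h1 (le_of_lt (mul_pos ht ht))
        calc t * t * c ≤ t * t * (t⁻¹ * (t⁻¹ * (x ⬝ᵥ (A *ᵥ x)))) := this
          _ = x ⬝ᵥ (A *ᵥ x) := by field_simp
      have hS' : x ⬝ᵥ (S *ᵥ x) ≤ t * t * K := by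
        rw [e2] at h2
        have := mul_le_mul_of_nonneg_left h2 (le_of_lt (mul_pos ht ht))
        calc x ⬝ᵥ (S *ᵥ x) = t * t * (t⁻¹ * (t⁻¹ * (x ⬝ᵥ (S *ᵥ x)))) := by field_simp
          _ ≤ t * t * K := this
      have expand : x ⬝ᵥ ((A - ε • S) *ᵥ x) = x ⬝ᵥ (A *ᵥ x) - ε * (x ⬝ᵥ (S *ᵥ x)) := by
        simp [Matrix.sub_mulVec, Matrix.smul_mulVec, dotProduct_sub, smul_dotProduct,
          dotProduct_smul, smul_eq_mul]
      rw [expand]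
      have hεK : ε * (t * t * K) < t * t * c := by
        have h3 : ε * K ≤ c / (K + 1) * K := mul_le_mul_of_nonneg_right hεb hKnn
        have h4 : c / (K + 1) * K < c := by
          rw [div_mul_eq_mul_div]
          rw [div_lt_iff₀ (by linarith)]
          nlinarith
        nlinarith [mul_pos ht ht]
      nlinarith [mul_le_mul_of_nonneg_left hS' (le_of_lt hε)]
    simpa [star_trivial] using key

lemma aux_smul_posDef {ι : Type*} [Fintype ι] [DecidableEq ι]
    {M : Matrix ι ι ℝ} (hM : M.PosDef) {c : ℝ} (hc : 0 < c) : (c • M).PosDef := by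
  refine Matrix.PosDef.of_dotProduct_mulVec_pos ?_ ?_
  · unfold Matrix.IsHermitian
    rw [Matrix.conjTranspose_smul, hM.1.eq]
    simp
  · intro x hx
    have := hM.dotProduct_mulVec_pos hx
    rw [Matrix.smul_mulVec, dotProduct_smul, smul_eq_mul]
    positivity

lemma aux_posDef_fromBlocks₂₂ {m n : Type*} [Fintype m] [Fintype n] [DecidableEq m]
    [DecidableEq n] (A : Matrix m m ℝ) (B : Matrix m n ℝ) {D : Matrix n n ℝ} (hD : D.PosDef)
    (h : (A - B * D⁻¹ * Bᴴ).PosDef) : (fromBlocks A B Bᴴ D).PosDef := by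
  haveI := hD.isUnit.invertible
  refine Matrix.PosDef.of_dotProduct_mulVec_pos ?_ ?_
  · exact (Matrix.IsHermitian.fromBlocks₂₂ A B hD.1).mpr h.1
  · intro z hz
    have hz' : z = Sum.elim (z ∘ Sum.inl) (z ∘ Sum.inr) := (Sum.elim_comp_inl_inr z).symm
    set x := z ∘ Sum.inl
    set y := z ∘ Sum.inr
    have hval : dotProduct (star z) ((fromBlocks A B Bᴴ D) *ᵥ z) =
        (star ((D⁻¹ * Bᴴ) *ᵥ x + y)) ᵥ* D ⬝ᵥ ((D⁻¹ * Bᴴ) *ᵥ x + y) +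
          (star x) ᵥ* (A - B * D⁻¹ * Bᴴ) ⬝ᵥ x := by
      rw [dotProduct_mulVec, hz']
      exact schur_complement_eq₂₂ A B x y hD.1
    rw [hval]
    rcases eq_or_ne x 0 with hx | hx
    · have hy : y ≠ 0 := by
        intro hy
        apply hz
        rw [hz', hx, hy]
        ext (i | i) <;> simp
      have hw : (D⁻¹ * Bᴴ) *ᵥ x + y ≠ 0 := by
        rw [hx]
        simpa using hy
      have h1 : 0 < (star ((D⁻¹ * Bᴴ) *ᵥ x + y)) ᵥ* D ⬝ᵥ ((D⁻¹ * Bᴴ) *ᵥ x + y) := by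
        rw [← dotProduct_mulVec]
        exact hD.dotProduct_mulVec_pos hw
      have h2 : (star x) ᵥ* (A - B * D⁻¹ * Bᴴ) ⬝ᵥ x = 0 := by
        rw [hx]
        simp
      linarith
    · have h1 : 0 ≤ (star ((D⁻¹ * Bᴴ) *ᵥ x + y)) ᵥ* D ⬝ᵥ ((D⁻¹ * Bᴴ) *ᵥ x + y) := by
        rw [← dotProduct_mulVec]
        exact hD.posSemidef.dotProduct_mulVec_nonneg _
      have h2 : 0 < (star x) ᵥ* (A - B * D⁻¹ * Bᴴ) ⬝ᵥ x := by
        rw [← dotProduct_mulVec]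
        exact h.dotProduct_mulVec_pos hx
      linarith


theorem stmt12 {n m p : ℕ} (Acl : Matrix (Fin n) (Fin n) ℝ) (Bcl : Matrix (Fin n) (Fin m) ℝ)
    (Ccl : Matrix (Fin p) (Fin n) ℝ) (Dcl : Matrix (Fin p) (Fin m) ℝ)
    (X₁ : Matrix (Fin n) (Fin n) ℝ) (hX₁ : X₁.PosDef) (hX₁s : X₁.IsSymm)
    (γ : ℝ) (hγ : 0 < γ)
    (hM₀ : (Matrix.fromBlocks
      (Matrix.fromBlocks (Acl * X₁ + X₁ * Aclᵀ) Bcl Bclᵀ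
        ((-γ) • (1 : Matrix (Fin m) (Fin m) ℝ)))
      (Matrix.fromRows (X₁ * Cclᵀ) Dclᵀ)
      (Matrix.fromCols (Ccl * X₁) Dcl)
      ((-γ) • (1 : Matrix (Fin p) (Fin p) ℝ))).NegDef) :
    ∃ εbar : ℝ, 0 < εbar ∧ ∀ ε₁ : ℝ, 0 < ε₁ → ε₁ ≤ εbar →
      ((Matrix.fromBlocks
          (Matrix.fromBlocks
            (Matrix.fromBlocks X₁ Bcl Bclᵀ ((-γ) • (1 : Matrix (Fin m) (Fin m) ℝ)))
            (Matrix.fromRows 0 Dclᵀ)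
            (Matrix.fromCols 0 Dcl)
            ((-γ) • (1 : Matrix (Fin p) (Fin p) ℝ)))
          (Matrix.fromRows (Matrix.fromRows (-X₁) 0) 0)
          (Matrix.fromCols (Matrix.fromCols (-X₁) 0) 0)
          0)
        + (Matrix.fromCols
            (Matrix.fromCols (Matrix.fromCols (Aclᵀ - (1 / 2 : ℝ) • 1) 0) Cclᵀ)
            (1 : Matrix (Fin n) (Fin n) ℝ))ᵀ * X₁ *
          (Matrix.fromCols
            (Matrix.fromCols (Matrix.fromCols (1 : Matrix (Fin n) (Fin n) ℝ) 0) 0)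
            ((-(2 * ε₁)) • (1 : Matrix (Fin n) (Fin n) ℝ)))
        + (Matrix.fromCols
            (Matrix.fromCols (Matrix.fromCols (1 : Matrix (Fin n) (Fin n) ℝ) 0) 0)
            ((-(2 * ε₁)) • (1 : Matrix (Fin n) (Fin n) ℝ)))ᵀ * X₁ᵀ *
          (Matrix.fromCols
            (Matrix.fromCols (Matrix.fromCols (Aclᵀ - (1 / 2 : ℝ) • 1) 0) Cclᵀ)
            (1 : Matrix (Fin n) (Fin n) ℝ))).NegDef := by

  set M₀ : Matrix ((Fin n ⊕ Fin m) ⊕ Fin p) ((Fin n ⊕ Fin m) ⊕ Fin p) ℝ :=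
    Matrix.fromBlocks
      (Matrix.fromBlocks (Acl * X₁ + X₁ * Aclᵀ) Bcl Bclᵀ
        ((-γ) • (1 : Matrix (Fin m) (Fin m) ℝ)))
      (Matrix.fromRows (X₁ * Cclᵀ) Dclᵀ)
      (Matrix.fromCols (Ccl * X₁) Dcl)
      ((-γ) • (1 : Matrix (Fin p) (Fin p) ℝ)) with hM₀def
  set R : Matrix ((Fin n ⊕ Fin m) ⊕ Fin p) (Fin n) ℝ :=
    Matrix.fromRows (Matrix.fromRows (Acl * X₁ - (2⁻¹ : ℝ) • X₁) 0) (Ccl * X₁) with hRdef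
  have hS : (R * X₁⁻¹ * Rᵀ).PosSemidef := by
    have h1 := hX₁.inv.posSemidef
    have h2 := h1.mul_mul_conjTranspose_same R
    rwa [Matrix.conjTranspose_eq_transpose_of_trivial] at h2
  obtain ⟨εbar, hεbar, hmain⟩ := aux_sub_smul_posDef hM₀ hS
  refine ⟨εbar, hεbar, fun ε₁ hε₁ hε₁b => ?_⟩
  have key : (Matrix.fromBlocks
          (Matrix.fromBlocks
            (Matrix.fromBlocks X₁ Bcl Bclᵀ ((-γ) • (1 : Matrix (Fin m) (Fin m) ℝ)))
            (Matrix.fromRows 0 Dclᵀ)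
            (Matrix.fromCols 0 Dcl)
            ((-γ) • (1 : Matrix (Fin p) (Fin p) ℝ)))
          (Matrix.fromRows (Matrix.fromRows (-X₁) 0) 0)
          (Matrix.fromCols (Matrix.fromCols (-X₁) 0) 0)
          0)
        + (Matrix.fromCols
            (Matrix.fromCols (Matrix.fromCols (Aclᵀ - (1 / 2 : ℝ) • 1) 0) Cclᵀ)
            (1 : Matrix (Fin n) (Fin n) ℝ))ᵀ * X₁ *
          (Matrix.fromCols
            (Matrix.fromCols (Matrix.fromCols (1 : Matrix (Fin n) (Fin n) ℝ) 0) 0)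
            ((-(2 * ε₁)) • (1 : Matrix (Fin n) (Fin n) ℝ)))
        + (Matrix.fromCols
            (Matrix.fromCols (Matrix.fromCols (1 : Matrix (Fin n) (Fin n) ℝ) 0) 0)
            ((-(2 * ε₁)) • (1 : Matrix (Fin n) (Fin n) ℝ)))ᵀ * X₁ᵀ *
          (Matrix.fromCols
            (Matrix.fromCols (Matrix.fromCols (Aclᵀ - (1 / 2 : ℝ) • 1) 0) Cclᵀ)
            (1 : Matrix (Fin n) (Fin n) ℝ))
      = Matrix.fromBlocks M₀ ((-(2 * ε₁)) • R) ((-(2 * ε₁)) • Rᵀ) ((-(4 * ε₁)) • X₁) := by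
    rw [hM₀def, hRdef, hX₁s.eq]
    simp only [Matrix.transpose_fromCols, Matrix.transpose_fromRows, Matrix.transpose_one,
      Matrix.transpose_zero, Matrix.transpose_sub, Matrix.transpose_smul, Matrix.transpose_neg,
      Matrix.transpose_transpose, hX₁s.eq,
      Matrix.fromRows_mul, Matrix.mul_fromCols, Matrix.fromRows_mul_fromCols,
      Matrix.mul_one, Matrix.one_mul, Matrix.mul_zero, Matrix.zero_mul,
      Matrix.mul_smul, Matrix.smul_mul,
      Matrix.fromBlocks_add, Matrix.fromBlocks_smul,
      Matrix.sub_mul, Matrix.mul_sub, Matrix.transpose_mul]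
    ext i j
    rcases i with ((i | i) | i) | i <;> rcases j with ((j | j) | j) | j <;>
      simp [Matrix.smul_apply, Matrix.add_apply, Matrix.sub_apply, Matrix.neg_apply,
        mul_comm, smul_smul] <;> ring
  unfold Matrix.NegDef
  rw [key]
  have hneg : -(Matrix.fromBlocks M₀ ((-(2 * ε₁)) • R) ((-(2 * ε₁)) • Rᵀ) ((-(4 * ε₁)) • X₁))
      = Matrix.fromBlocks (-M₀) ((2 * ε₁) • R) (((2 * ε₁) • R)ᴴ) ((4 * ε₁) • X₁) := by
    rw [Matrix.conjTranspose_eq_transpose_of_trivial, Matrix.transpose_smul]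
    ext i j
    rcases i with (i | i) <;> rcases j with (j | j) <;>
      simp [Matrix.neg_apply, Matrix.smul_apply] <;> ring
  rw [hneg]
  have hDpos : ((4 * ε₁) • X₁).PosDef := aux_smul_posDef hX₁ (by positivity)
  apply aux_posDef_fromBlocks₂₂ _ _ hDpos
  have hXdet : IsUnit X₁.det := (Matrix.isUnit_iff_isUnit_det _).mp hX₁.isUnit
  haveI : Invertible ((4 : ℝ) * ε₁) := invertibleOfNonzero (by positivity)
  have hinv : ((4 * ε₁) • X₁)⁻¹ = (4 * ε₁)⁻¹ • X₁⁻¹ := by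
    apply Matrix.inv_eq_right_inv
    rw [Matrix.smul_mul, Matrix.mul_smul, smul_smul, Matrix.mul_nonsing_inv _ hXdet]
    rw [mul_inv_cancel₀ (by positivity : (4 : ℝ) * ε₁ ≠ 0), one_smul]
  have hprod : ((2 * ε₁) • R) * ((4 * ε₁) • X₁)⁻¹ * ((2 * ε₁) • R)ᴴ
      = ε₁ • (R * X₁⁻¹ * Rᵀ) := by
    rw [Matrix.conjTranspose_eq_transpose_of_trivial, Matrix.transpose_smul, hinv]
    simp only [Matrix.smul_mul, Matrix.mul_smul, smul_smul]
    congr 1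
    field_simp
    ring
  rw [hprod]
  exact hmain ε₁ hε₁ hε₁b
end

section
/- (Theorem 2, invariant set dilation, forward direction) Let A_cl be n×n, B_cl n×m real matrices, X₂ symmetric positive definite, G₂ an n×n matrix, α > 0, 0 < ε₂ < 1, and set Â = A_cl + (α/2)I. Define M = [[X₂, B_cl, -X₂], [B_cl^T, -αI, 0], [-X₂, 0, 0]], P = [I, 0, -2ε₂I], Q = [Â^T - (1/2)I, 0, I]. If M + Q^T G₂ P + P^T G₂^T Q is negative definite, then [[A_cl X₂ + X₂ A_cl^T + α X₂, B_cl], [B_cl^T, -αI]] is negative definite. -/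
open Matrix

/-- Congruence preserves positive definiteness when the congruence matrix has
trivial kernel (as a map via `mulVec`). -/
lemma posDef_congr {k l : Type*} [Fintype k] [Fintype l]
    {A : Matrix k k ℝ} (hA : A.PosDef) (N : Matrix k l ℝ)
    (hN : ∀ x : l → ℝ, x ≠ 0 → N *ᵥ x ≠ 0) : (Nᵀ * A * N).PosDef := by
  refine Matrix.PosDef.of_dotProduct_mulVec_pos ?_ ?_
  · have h := hA.1
    unfold Matrix.IsHermitian at h ⊢
    rw [Matrix.conjTranspose_mul, Matrix.conjTranspose_mul, h]
    rw [show Nᵀᴴ = (Nᴴ)ᵀ from rfl]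
    have : Nᴴ = Nᵀ := by ext i j; simp [Matrix.conjTranspose_apply]
    rw [this, Matrix.transpose_transpose, Matrix.mul_assoc]
  · intro x hx
    have h := hA.dotProduct_mulVec_pos (hN x hx)
    have e : star x ⬝ᵥ ((Nᵀ * A * N) *ᵥ x) = star (N *ᵥ x) ⬝ᵥ (A *ᵥ (N *ᵥ x)) := by
      rw [← Matrix.mulVec_mulVec, ← Matrix.mulVec_mulVec]
      rw [Matrix.dotProduct_mulVec, star_trivial, star_trivial, Matrix.vecMul_transpose]
    rw [e]; exact h

theorem stmt13 {n m : ℕ} (Acl : Matrix (Fin n) (Fin n) ℝ) (Bcl : Matrix (Fin n) (Fin m) ℝ)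
    (X₂ : Matrix (Fin n) (Fin n) ℝ) (hX₂ : X₂.PosDef) (hX₂s : X₂.IsSymm)
    (G₂ : Matrix (Fin n) (Fin n) ℝ) (α : ℝ) (hα : 0 < α)
    (ε₂ : ℝ) (hε₂ : 0 < ε₂) (hε₂' : ε₂ < 1)
    (Ahat : Matrix (Fin n) (Fin n) ℝ) (hAhat : Ahat = Acl + (α / 2) • 1)
    (M : Matrix ((Fin n ⊕ Fin m) ⊕ Fin n) ((Fin n ⊕ Fin m) ⊕ Fin n) ℝ)
    (hM : M = Matrix.fromBlocks
      (Matrix.fromBlocks X₂ Bcl Bclᵀ ((-α) • (1 : Matrix (Fin m) (Fin m) ℝ)))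
      (Matrix.fromRows (-X₂) 0)
      (Matrix.fromCols (-X₂) 0)
      0)
    (P : Matrix (Fin n) ((Fin n ⊕ Fin m) ⊕ Fin n) ℝ)
    (hP : P = Matrix.fromCols
      (Matrix.fromCols (1 : Matrix (Fin n) (Fin n) ℝ) 0)
      ((-(2 * ε₂)) • (1 : Matrix (Fin n) (Fin n) ℝ)))
    (Q : Matrix (Fin n) ((Fin n ⊕ Fin m) ⊕ Fin n) ℝ)
    (hQ : Q = Matrix.fromCols
      (Matrix.fromCols (Ahatᵀ - (1 / 2 : ℝ) • 1) 0)
      (1 : Matrix (Fin n) (Fin n) ℝ))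
    (hDil : (M + Qᵀ * G₂ * P + Pᵀ * G₂ᵀ * Q).NegDef) :
    (Matrix.fromBlocks (Acl * X₂ + X₂ * Aclᵀ + α • X₂) Bcl Bclᵀ
      ((-α) • (1 : Matrix (Fin m) (Fin m) ℝ))).NegDef := by
  set K : Matrix (Fin n) (Fin n ⊕ Fin m) ℝ :=
    Matrix.fromCols ((1/2 : ℝ) • 1 - Ahatᵀ) 0 with hK
  set N : Matrix ((Fin n ⊕ Fin m) ⊕ Fin n) (Fin n ⊕ Fin m) ℝ :=
    Matrix.fromRows (1 : Matrix (Fin n ⊕ Fin m) (Fin n ⊕ Fin m) ℝ) K with hN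
  -- Q * N = 0
  have hQN : Q * N = 0 := by
    rw [hQ, hN, Matrix.fromCols_mul_fromRows, hK]
    ext i (j | j) <;>
      simp [Matrix.fromCols, Matrix.add_apply, Matrix.sub_apply]
  have hPNt : ∀ (G : Matrix (Fin n) (Fin n) ℝ) (R : Matrix (Fin n) ((Fin n ⊕ Fin m) ⊕ Fin n) ℝ),
      Nᵀ * (Qᵀ * G * R) * N = 0 := by
    intro G R
    have : Nᵀ * (Qᵀ * G * R) * N = (Q * N)ᵀ * (G * (R * N)) := by
      rw [Matrix.transpose_mul]
      simp only [Matrix.mul_assoc]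
    rw [this, hQN, Matrix.transpose_zero, Matrix.zero_mul]
  have hNtQ : ∀ (G : Matrix (Fin n) (Fin n) ℝ) (R : Matrix (Fin n) ((Fin n ⊕ Fin m) ⊕ Fin n) ℝ),
      Nᵀ * (Rᵀ * G * Q) * N = 0 := by
    intro G R
    have : Nᵀ * (Rᵀ * G * Q) * N = ((R * N)ᵀ * G) * (Q * N) := by
      rw [Matrix.transpose_mul]
      simp only [Matrix.mul_assoc]
    rw [this, hQN, Matrix.mul_zero]
  -- the core congruence identity
  have hkey : Nᵀ * (M + Qᵀ * G₂ * P + Pᵀ * G₂ᵀ * Q) * N =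
      Matrix.fromBlocks (Acl * X₂ + X₂ * Aclᵀ + α • X₂) Bcl Bclᵀ
        ((-α) • (1 : Matrix (Fin m) (Fin m) ℝ)) := by
    have expand : Nᵀ * (M + Qᵀ * G₂ * P + Pᵀ * G₂ᵀ * Q) * N =
        Nᵀ * M * N + Nᵀ * (Qᵀ * G₂ * P) * N + Nᵀ * (Pᵀ * G₂ᵀ * Q) * N := by
      simp only [Matrix.mul_add, Matrix.add_mul]
    rw [expand, hPNt G₂ P, hNtQ G₂ᵀ P, add_zero, add_zero]
    rw [hM, hN, hK]
    simp only [Matrix.transpose_fromRows, Matrix.transpose_one, Matrix.transpose_fromCols,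
      Matrix.transpose_sub, Matrix.transpose_smul, Matrix.transpose_zero,
      Matrix.fromCols_mul_fromBlocks, Matrix.fromCols_mul_fromRows,
      Matrix.fromRows_mul, Matrix.mul_fromCols, Matrix.fromRows_mul_fromCols,
      Matrix.mul_zero, Matrix.zero_mul, Matrix.one_mul, Matrix.mul_one,
      Matrix.fromRows_zero, Matrix.fromCols_zero, add_zero, zero_add,
      Matrix.fromRows_fromCols_eq_fromBlocks, Matrix.fromCols_fromRows_eq_fromBlocks,
      Matrix.fromBlocks_add, Matrix.fromBlocks_multiply]
    have e1 : ∀ (A : Matrix (Fin n) (Fin n) ℝ), Matrix.fromCols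
        (Matrix.fromRows A (0 : Matrix (Fin m) (Fin n) ℝ))
        (0 : Matrix (Fin n ⊕ Fin m) (Fin m) ℝ) = Matrix.fromBlocks A 0 0 0 := by
      intro A
      rw [← Matrix.fromRows_zero (m₁ := Fin n) (m₂ := Fin m),
        Matrix.fromCols_fromRows_eq_fromBlocks]
    rw [Matrix.transpose_transpose, e1, e1, Matrix.fromBlocks_add, Matrix.fromBlocks_add]
    have hblk : X₂ + ((1/2 : ℝ) • 1 - Ahat) * (-X₂) + (-X₂) * ((1/2 : ℝ) • 1 - Ahatᵀ)
        = Acl * X₂ + X₂ * Aclᵀ + α • X₂ := by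
      subst hAhat
      simp only [Matrix.transpose_add, Matrix.transpose_smul, Matrix.transpose_one,
        Matrix.sub_mul, Matrix.mul_sub, Matrix.add_mul, Matrix.mul_add,
        Matrix.smul_mul, Matrix.mul_smul, Matrix.one_mul, Matrix.mul_one,
        Matrix.neg_mul, Matrix.mul_neg]
      module
    rw [hblk]
    simp
  -- injectivity of N on vectors
  have hNinj : ∀ x : (Fin n ⊕ Fin m) → ℝ, x ≠ 0 → N *ᵥ x ≠ 0 := by
    intro x hx h0
    apply hx
    have := congrFun h0
    funext i
    have hi := this (Sum.inl i)
    simpa [hN, Matrix.fromRows_mulVec] using hi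
  -- conclude
  unfold Matrix.NegDef at hDil ⊢
  have := posDef_congr hDil N hNinj
  rwa [show Nᵀ * -(M + Qᵀ * G₂ * P + Pᵀ * G₂ᵀ * Q) * N
      = -(Nᵀ * (M + Qᵀ * G₂ * P + Pᵀ * G₂ᵀ * Q) * N) from by
        simp only [Matrix.mul_neg, Matrix.neg_mul], hkey] at this
end

section
/- (Theorem 3, constraint LMI dilation, equivalence) Let K be an m×n real matrix, c > 0 a real constant, X₃ symmetric positive definite, and 0 < ε₃ < 1. Define M = [[X₃, 0, -X₃], [0, -cI_m, 0], [-X₃, 0, 0]], P = [I, 0, -2ε₃I], Q = [-I, -K^T, I]. Then: (a) if there exists G₃ with M + Q^T G₃ P + P^T G₃^T Q negative definite, then [[-X₃, -X₃K^T], [-KX₃, -cI_m]] is negative definite; (b) conversely, if [[-X₃, -X₃K^T], [-KX₃, -cI_m]] is negative definite, then there exists ε̄ > 0 such that for all 0 < ε₃ ≤ ε̄, the choice G₃ = X₃ makes M + Q^T G₃ P + P^T G₃^T Q negative definite. -/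
open Matrix

section Aux

variable {ι κ : Type*} [Fintype ι] [Fintype κ]

lemma dp_flip (M : Matrix ι κ ℝ) (a : ι → ℝ) (b : κ → ℝ) :
    a ⬝ᵥ M *ᵥ b = b ⬝ᵥ Mᵀ *ᵥ a := by
  rw [Matrix.dotProduct_mulVec, ← Matrix.vecMul_transpose, Matrix.transpose_transpose,
    dotProduct_comm]

lemma dp_tflip (M : Matrix ι κ ℝ) (a : ι → ℝ) (b : κ → ℝ) :
    (Mᵀ *ᵥ a) ⬝ᵥ b = a ⬝ᵥ M *ᵥ b := by
  rw [dotProduct_comm, ← dp_flip]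

lemma dp_sq_continuous : Continuous fun w : ι → ℝ => w ⬝ᵥ w := by
  simp only [dotProduct]
  exact continuous_finset_sum _ fun i _ => (continuous_apply i).mul (continuous_apply i)

lemma quad_continuous (B : Matrix ι ι ℝ) : Continuous fun w : ι → ℝ => w ⬝ᵥ B *ᵥ w := by
  simp only [dotProduct, Matrix.mulVec]
  exact continuous_finset_sum _ fun i _ => (continuous_apply i).mul
    (continuous_finset_sum _ fun j _ => continuous_const.mul (continuous_apply j))

lemma dp_self_nonneg (w : ι → ℝ) : 0 ≤ w ⬝ᵥ w :=
  Finset.sum_nonneg fun i _ => mul_self_nonneg _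

lemma dp_self_pos {w : ι → ℝ} (hw : w ≠ 0) : 0 < w ⬝ᵥ w := by
  obtain ⟨i, hi⟩ : ∃ i, w i ≠ 0 := by
    by_contra h
    push_neg at h
    exact hw (funext h)
  exact Finset.sum_pos' (fun j _ => mul_self_nonneg _)
    ⟨i, Finset.mem_univ i, mul_self_pos.2 hi⟩

lemma quad_scale (B : Matrix ι ι ℝ) (w : ι → ℝ) (t : ℝ) :
    (t • w) ⬝ᵥ B *ᵥ (t • w) = t * t * (w ⬝ᵥ B *ᵥ w) := by
  simp only [Matrix.mulVec_smul, smul_dotProduct, dotProduct_smul, smul_eq_mul]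
  ring

lemma dp_scale (w : ι → ℝ) (t : ℝ) : (t • w) ⬝ᵥ (t • w) = t * t * (w ⬝ᵥ w) := by
  simp only [smul_dotProduct, dotProduct_smul, smul_eq_mul]
  ring

lemma sphere_compact : IsCompact {w : ι → ℝ | w ⬝ᵥ w = 1} := by
  apply Metric.isCompact_of_isClosed_isBounded
  · exact isClosed_eq dp_sq_continuous continuous_const
  · apply (Metric.isBounded_closedBall (x := (0 : ι → ℝ)) (r := 1)).subset
    intro w hw
    rw [Metric.mem_closedBall, dist_zero_right]
    refine pi_norm_le_iff_of_nonneg zero_le_one |>.2 fun i => ?_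
    rw [Real.norm_eq_abs, abs_le_one_iff_mul_self_le_one]
    calc w i * w i ≤ w ⬝ᵥ w :=
          Finset.single_le_sum (fun j _ => mul_self_nonneg (w j)) (Finset.mem_univ i)
      _ = 1 := hw

lemma sphere_nonempty [Nonempty ι] : ({w : ι → ℝ | w ⬝ᵥ w = 1}).Nonempty := by
  classical
  refine ⟨Pi.single (Classical.arbitrary ι) 1, ?_⟩
  simp [dotProduct, Pi.single_apply]

lemma scale_mem_sphere {w : ι → ℝ} (hw : w ≠ 0) :
    ((Real.sqrt (w ⬝ᵥ w))⁻¹ • w) ⬝ᵥ ((Real.sqrt (w ⬝ᵥ w))⁻¹ • w) = 1 := by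
  have hs0 : 0 < w ⬝ᵥ w := dp_self_pos hw
  have ht2 : Real.sqrt (w ⬝ᵥ w) * Real.sqrt (w ⬝ᵥ w) = w ⬝ᵥ w := Real.mul_self_sqrt hs0.le
  rw [dp_scale, ← mul_inv, ht2, inv_mul_cancel₀ hs0.ne']

lemma quad_upper (B : Matrix ι ι ℝ) :
    ∃ C : ℝ, ∀ w : ι → ℝ, w ⬝ᵥ B *ᵥ w ≤ C * (w ⬝ᵥ w) := by
  rcases isEmpty_or_nonempty ι with h | h
  · exact ⟨0, fun w => by simp [dotProduct]⟩
  obtain ⟨w₀, -, hmax⟩ :=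
    sphere_compact.exists_isMaxOn sphere_nonempty (quad_continuous B).continuousOn
  refine ⟨w₀ ⬝ᵥ B *ᵥ w₀, fun w => ?_⟩
  rcases eq_or_ne w 0 with rfl | hw
  · simp
  have hs0 : 0 < w ⬝ᵥ w := dp_self_pos hw
  set t := Real.sqrt (w ⬝ᵥ w) with ht
  have ht0 : 0 < t := Real.sqrt_pos.2 hs0
  have ht2 : t * t = w ⬝ᵥ w := Real.mul_self_sqrt hs0.le
  have hle : (t⁻¹ • w) ⬝ᵥ B *ᵥ (t⁻¹ • w) ≤ w₀ ⬝ᵥ B *ᵥ w₀ := hmax (scale_mem_sphere hw)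
  rw [quad_scale] at hle
  have h2 := mul_le_mul_of_nonneg_left hle (mul_pos ht0 ht0).le
  have h3 : t * t * (t⁻¹ * t⁻¹ * (w ⬝ᵥ B *ᵥ w)) = w ⬝ᵥ B *ᵥ w := by
    field_simp
  rw [h3, ht2] at h2
  linarith [h2]

lemma quad_lower {A : Matrix ι ι ℝ} (hA : A.PosDef) :
    ∃ lam : ℝ, 0 < lam ∧ ∀ w : ι → ℝ, lam * (w ⬝ᵥ w) ≤ w ⬝ᵥ A *ᵥ w := by
  rcases isEmpty_or_nonempty ι with h | h
  · exact ⟨1, one_pos, fun w => by simp [dotProduct]⟩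
  obtain ⟨w₀, hw₀, hmin⟩ :=
    sphere_compact.exists_isMinOn sphere_nonempty (quad_continuous A).continuousOn
  have hw₀ne : w₀ ≠ 0 := by
    intro h0
    rw [Set.mem_setOf_eq, h0] at hw₀
    simp [dotProduct] at hw₀
  have hpos : 0 < w₀ ⬝ᵥ A *ᵥ w₀ := by simpa using hA.dotProduct_mulVec_pos hw₀ne
  refine ⟨w₀ ⬝ᵥ A *ᵥ w₀, hpos, fun w => ?_⟩
  rcases eq_or_ne w 0 with rfl | hw
  · simp
  have hs0 : 0 < w ⬝ᵥ w := dp_self_pos hw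
  set t := Real.sqrt (w ⬝ᵥ w) with ht
  have ht0 : 0 < t := Real.sqrt_pos.2 hs0
  have ht2 : t * t = w ⬝ᵥ w := Real.mul_self_sqrt hs0.le
  have hle : w₀ ⬝ᵥ A *ᵥ w₀ ≤ (t⁻¹ • w) ⬝ᵥ A *ᵥ (t⁻¹ • w) := hmin (scale_mem_sphere hw)
  rw [quad_scale] at hle
  have h2 := mul_le_mul_of_nonneg_left hle (mul_pos ht0 ht0).le
  have h3 : t * t * (t⁻¹ * t⁻¹ * (w ⬝ᵥ A *ᵥ w)) = w ⬝ᵥ A *ᵥ w := by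
    field_simp
  rw [h3, ht2] at h2
  linarith [h2]

end Aux
section Quad
variable {n m : ℕ}

lemma quadT (K : Matrix (Fin m) (Fin n) ℝ) (c : ℝ) (X₃ : Matrix (Fin n) (Fin n) ℝ)
    (x : Fin n → ℝ) (u : Fin m → ℝ) :
    (Sum.elim x u) ⬝ᵥ (Matrix.fromBlocks (-X₃) (-(X₃ * Kᵀ)) (-(K * X₃))
        ((-c) • (1 : Matrix (Fin m) (Fin m) ℝ))) *ᵥ (Sum.elim x u)
      = -(x ⬝ᵥ X₃ *ᵥ x) - x ⬝ᵥ X₃ *ᵥ (Kᵀ *ᵥ u) - u ⬝ᵥ K *ᵥ (X₃ *ᵥ x) - c * (u ⬝ᵥ u) := by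
  simp only [Matrix.fromBlocks_mulVec, Sum.elim_comp_inl, Sum.elim_comp_inr,
    ← Matrix.mulVec_mulVec, Matrix.neg_mulVec, Matrix.one_mulVec, Matrix.smul_mulVec,
    sumElim_dotProduct_sumElim, dotProduct_add, add_dotProduct,
    dotProduct_neg, neg_dotProduct, dotProduct_smul, smul_eq_mul]
  ring

lemma quadS (K : Matrix (Fin m) (Fin n) ℝ) (c ε₃ : ℝ) (X₃ G₃ : Matrix (Fin n) (Fin n) ℝ)
    (x : Fin n → ℝ) (u : Fin m → ℝ) (z : Fin n → ℝ) :
    (Sum.elim (Sum.elim x u) z) ⬝ᵥ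
      ((Matrix.fromBlocks
            (Matrix.fromBlocks X₃ 0 0 ((-c) • (1 : Matrix (Fin m) (Fin m) ℝ)))
            (Matrix.fromRows (-X₃) 0)
            (Matrix.fromCols (-X₃) 0)
            0)
          + (Matrix.fromCols (Matrix.fromCols (-(1 : Matrix (Fin n) (Fin n) ℝ)) (-Kᵀ))
              (1 : Matrix (Fin n) (Fin n) ℝ))ᵀ * G₃ *
            (Matrix.fromCols (Matrix.fromCols (1 : Matrix (Fin n) (Fin n) ℝ) 0)
              ((-(2 * ε₃)) • (1 : Matrix (Fin n) (Fin n) ℝ)))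
          + (Matrix.fromCols (Matrix.fromCols (1 : Matrix (Fin n) (Fin n) ℝ) 0)
              ((-(2 * ε₃)) • (1 : Matrix (Fin n) (Fin n) ℝ)))ᵀ * G₃ᵀ *
            (Matrix.fromCols (Matrix.fromCols (-(1 : Matrix (Fin n) (Fin n) ℝ)) (-Kᵀ))
              (1 : Matrix (Fin n) (Fin n) ℝ))) *ᵥ (Sum.elim (Sum.elim x u) z)
    = x ⬝ᵥ X₃ *ᵥ x - c * (u ⬝ᵥ u) - x ⬝ᵥ X₃ *ᵥ z - z ⬝ᵥ X₃ *ᵥ x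
      + (z - x - Kᵀ *ᵥ u) ⬝ᵥ G₃ *ᵥ (x - (2 * ε₃) • z)
      + (x - (2 * ε₃) • z) ⬝ᵥ G₃ᵀ *ᵥ (z - x - Kᵀ *ᵥ u) := by
  simp only [Matrix.add_mulVec, Matrix.transpose_fromCols, Matrix.transpose_fromRows,
    Matrix.transpose_neg, Matrix.transpose_one, Matrix.transpose_transpose, Matrix.transpose_smul,
    Matrix.transpose_zero, Matrix.mul_assoc, ← Matrix.mulVec_mulVec,
    Matrix.fromBlocks_mulVec, Matrix.fromCols_mulVec_sumElim, Matrix.fromRows_mulVec,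
    Sum.elim_comp_inl, Sum.elim_comp_inr,
    Matrix.neg_mulVec, Matrix.one_mulVec, Matrix.zero_mulVec, Matrix.smul_mulVec,
    Matrix.mulVec_add, Matrix.mulVec_neg, Matrix.mulVec_smul, Matrix.mulVec_zero,
    Matrix.mulVec_sub, sumElim_dotProduct_sumElim,
    dotProduct_add, add_dotProduct, dotProduct_neg, neg_dotProduct,
    dotProduct_smul, smul_dotProduct, dotProduct_zero,
    zero_dotProduct, dotProduct_sub, sub_dotProduct,
    dp_tflip, smul_eq_mul]
  ring
end Quad
section Main
variable {n m : ℕ}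

lemma hermT (K : Matrix (Fin m) (Fin n) ℝ) (c : ℝ) {X₃ : Matrix (Fin n) (Fin n) ℝ}
    (hX₃s : X₃ᵀ = X₃) :
    (-(Matrix.fromBlocks (-X₃) (-(X₃ * Kᵀ)) (-(K * X₃))
        ((-c) • (1 : Matrix (Fin m) (Fin m) ℝ)))).IsHermitian := by
  rw [Matrix.IsHermitian, Matrix.conjTranspose_eq_transpose_of_trivial]
  simp [Matrix.fromBlocks_transpose, Matrix.transpose_mul, hX₃s]

lemma hermS (K : Matrix (Fin m) (Fin n) ℝ) (c ε₃ : ℝ) {X₃ : Matrix (Fin n) (Fin n) ℝ}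
    (G₃ : Matrix (Fin n) (Fin n) ℝ) (hX₃s : X₃ᵀ = X₃) :
    (-((Matrix.fromBlocks
            (Matrix.fromBlocks X₃ 0 0 ((-c) • (1 : Matrix (Fin m) (Fin m) ℝ)))
            (Matrix.fromRows (-X₃) 0)
            (Matrix.fromCols (-X₃) 0)
            0)
          + (Matrix.fromCols (Matrix.fromCols (-(1 : Matrix (Fin n) (Fin n) ℝ)) (-Kᵀ))
              (1 : Matrix (Fin n) (Fin n) ℝ))ᵀ * G₃ *
            (Matrix.fromCols (Matrix.fromCols (1 : Matrix (Fin n) (Fin n) ℝ) 0)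
              ((-(2 * ε₃)) • (1 : Matrix (Fin n) (Fin n) ℝ)))
          + (Matrix.fromCols (Matrix.fromCols (1 : Matrix (Fin n) (Fin n) ℝ) 0)
              ((-(2 * ε₃)) • (1 : Matrix (Fin n) (Fin n) ℝ)))ᵀ * G₃ᵀ *
            (Matrix.fromCols (Matrix.fromCols (-(1 : Matrix (Fin n) (Fin n) ℝ)) (-Kᵀ))
              (1 : Matrix (Fin n) (Fin n) ℝ)))).IsHermitian := by
  rw [Matrix.IsHermitian, Matrix.conjTranspose_eq_transpose_of_trivial]
  simp only [Matrix.transpose_neg, Matrix.transpose_add, Matrix.transpose_mul,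
    Matrix.transpose_transpose, Matrix.fromBlocks_transpose, Matrix.transpose_fromCols,
    Matrix.transpose_fromRows, Matrix.transpose_one, Matrix.transpose_zero, Matrix.transpose_smul,
    hX₃s, Matrix.mul_assoc]
  congr 1
  abel

end Main
section Main2
variable {n m : ℕ}

lemma quadB (K : Matrix (Fin m) (Fin n) ℝ) (X₃ : Matrix (Fin n) (Fin n) ℝ)
    (x : Fin n → ℝ) (u : Fin m → ℝ) :
    (Sum.elim x u) ⬝ᵥ ((Matrix.fromCols (1 : Matrix (Fin n) (Fin n) ℝ) Kᵀ)ᵀ * X₃ *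
        (Matrix.fromCols (1 : Matrix (Fin n) (Fin n) ℝ) Kᵀ)) *ᵥ (Sum.elim x u)
      = x ⬝ᵥ X₃ *ᵥ x + x ⬝ᵥ X₃ *ᵥ (Kᵀ *ᵥ u) + u ⬝ᵥ K *ᵥ (X₃ *ᵥ x)
        + u ⬝ᵥ K *ᵥ (X₃ *ᵥ (Kᵀ *ᵥ u)) := by
  simp only [Matrix.transpose_fromCols, Matrix.transpose_one, Matrix.transpose_transpose,
    Matrix.mul_assoc, ← Matrix.mulVec_mulVec, Matrix.fromCols_mulVec_sumElim,
    Matrix.fromRows_mulVec, Matrix.one_mulVec, Matrix.mulVec_add,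
    sumElim_dotProduct_sumElim, dotProduct_add, add_dotProduct,
    dp_tflip]
  ring
end Main2

theorem stmt14 {n m : ℕ} (K : Matrix (Fin m) (Fin n) ℝ) (c : ℝ) (hc : 0 < c)
    (X₃ : Matrix (Fin n) (Fin n) ℝ) (hX₃ : X₃.PosDef) (hX₃s : X₃.IsSymm) :
    (∀ ε₃ : ℝ, 0 < ε₃ → ε₃ < 1 →
      (∃ G₃ : Matrix (Fin n) (Fin n) ℝ,
        ((Matrix.fromBlocks
            (Matrix.fromBlocks X₃ 0 0 ((-c) • (1 : Matrix (Fin m) (Fin m) ℝ)))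
            (Matrix.fromRows (-X₃) 0)
            (Matrix.fromCols (-X₃) 0)
            0)
          + (Matrix.fromCols (Matrix.fromCols (-(1 : Matrix (Fin n) (Fin n) ℝ)) (-Kᵀ))
              (1 : Matrix (Fin n) (Fin n) ℝ))ᵀ * G₃ *
            (Matrix.fromCols (Matrix.fromCols (1 : Matrix (Fin n) (Fin n) ℝ) 0)
              ((-(2 * ε₃)) • (1 : Matrix (Fin n) (Fin n) ℝ)))
          + (Matrix.fromCols (Matrix.fromCols (1 : Matrix (Fin n) (Fin n) ℝ) 0)
              ((-(2 * ε₃)) • (1 : Matrix (Fin n) (Fin n) ℝ)))ᵀ * G₃ᵀ *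
            (Matrix.fromCols (Matrix.fromCols (-(1 : Matrix (Fin n) (Fin n) ℝ)) (-Kᵀ))
              (1 : Matrix (Fin n) (Fin n) ℝ))).NegDef) →
      (Matrix.fromBlocks (-X₃) (-(X₃ * Kᵀ)) (-(K * X₃))
        ((-c) • (1 : Matrix (Fin m) (Fin m) ℝ))).NegDef)
    ∧
    ((Matrix.fromBlocks (-X₃) (-(X₃ * Kᵀ)) (-(K * X₃))
        ((-c) • (1 : Matrix (Fin m) (Fin m) ℝ))).NegDef →
      ∃ εbar : ℝ, 0 < εbar ∧ ∀ ε₃ : ℝ, 0 < ε₃ → ε₃ ≤ εbar →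
        ((Matrix.fromBlocks
            (Matrix.fromBlocks X₃ 0 0 ((-c) • (1 : Matrix (Fin m) (Fin m) ℝ)))
            (Matrix.fromRows (-X₃) 0)
            (Matrix.fromCols (-X₃) 0)
            0)
          + (Matrix.fromCols (Matrix.fromCols (-(1 : Matrix (Fin n) (Fin n) ℝ)) (-Kᵀ))
              (1 : Matrix (Fin n) (Fin n) ℝ))ᵀ * X₃ *
            (Matrix.fromCols (Matrix.fromCols (1 : Matrix (Fin n) (Fin n) ℝ) 0)
              ((-(2 * ε₃)) • (1 : Matrix (Fin n) (Fin n) ℝ)))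
          + (Matrix.fromCols (Matrix.fromCols (1 : Matrix (Fin n) (Fin n) ℝ) 0)
              ((-(2 * ε₃)) • (1 : Matrix (Fin n) (Fin n) ℝ)))ᵀ * X₃ᵀ *
            (Matrix.fromCols (Matrix.fromCols (-(1 : Matrix (Fin n) (Fin n) ℝ)) (-Kᵀ))
              (1 : Matrix (Fin n) (Fin n) ℝ))).NegDef) := by
  have hX₃t : X₃ᵀ = X₃ := hX₃s
  constructor
  · -- direction (a)
    rintro ε₃ hε0 hε1 ⟨G₃, hS⟩
    refine Matrix.PosDef.of_dotProduct_mulVec_pos (hermT K c hX₃t) fun ⦃w⦄ hw => ?_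
    set x : Fin n → ℝ := fun i => w (Sum.inl i) with hxdef
    set u : Fin m → ℝ := fun j => w (Sum.inr j) with hudef
    have hweq : w = Sum.elim x u := by funext i; rcases i with i | j <;> rfl
    set z : Fin n → ℝ := x + Kᵀ *ᵥ u with hzdef
    have hvne : Sum.elim (Sum.elim x u) z ≠ 0 := by
      intro h
      apply hw
      rw [hweq]
      funext i
      rcases i with i | j
      · exact congrFun h (Sum.inl (Sum.inl i))
      · exact congrFun h (Sum.inl (Sum.inr j))
    have hq := hS.dotProduct_mulVec_pos hvne
    rw [star_trivial, Matrix.neg_mulVec, dotProduct_neg, quadS] at hq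
    have hz0 : z - x - Kᵀ *ᵥ u = 0 := by rw [hzdef]; abel
    rw [hz0] at hq
    simp only [zero_dotProduct, Matrix.mulVec_zero, dotProduct_zero,
      add_zero] at hq
    rw [star_trivial, Matrix.neg_mulVec, dotProduct_neg, hweq, quadT]
    rw [hzdef] at hq
    simp only [Matrix.mulVec_add, dotProduct_add, add_dotProduct,
      dp_tflip] at hq
    linarith
  · -- direction (b)
    intro hT
    obtain ⟨lam, hlam, hlow⟩ := quad_lower hT
    obtain ⟨C, hC⟩ := quad_upper ((Matrix.fromCols (1 : Matrix (Fin n) (Fin n) ℝ) Kᵀ)ᵀ * X₃ *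
        (Matrix.fromCols (1 : Matrix (Fin n) (Fin n) ℝ) Kᵀ))
    refine ⟨lam / (2 * (|C| + 1)), by positivity, fun ε₃ hε0 hεb => ?_⟩
    have hεlam : 2 * ε₃ * (|C| + 1) ≤ lam := by
      rw [le_div_iff₀ (by positivity)] at hεb
      linarith
    refine Matrix.PosDef.of_dotProduct_mulVec_pos (hermS K c ε₃ X₃ hX₃t) fun ⦃v⦄ hv => ?_
    set x : Fin n → ℝ := fun i => v (Sum.inl (Sum.inl i)) with hxdef
    set u : Fin m → ℝ := fun j => v (Sum.inl (Sum.inr j)) with hudef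
    set z : Fin n → ℝ := fun k => v (Sum.inr k) with hzdef
    have hveq : v = Sum.elim (Sum.elim x u) z := by
      funext i; rcases i with (i | j) | k <;> rfl
    rw [star_trivial, hveq, Matrix.neg_mulVec, dotProduct_neg, quadS]
    -- expand everything into atoms
    simp only [Matrix.mulVec_sub, Matrix.mulVec_add, Matrix.mulVec_smul,
      dotProduct_sub, sub_dotProduct, dotProduct_add,
      add_dotProduct, dotProduct_smul, smul_dotProduct,
      smul_eq_mul, hX₃t, dp_tflip]
    -- symmetry facts
    have hsym1 : z ⬝ᵥ X₃ *ᵥ x = x ⬝ᵥ X₃ *ᵥ z := by rw [dp_flip X₃ z x, hX₃t]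
    have hsym2 : x ⬝ᵥ X₃ *ᵥ (Kᵀ *ᵥ u) = u ⬝ᵥ K *ᵥ (X₃ *ᵥ x) := by
      rw [dp_flip X₃ x (Kᵀ *ᵥ u), hX₃t, dp_tflip]
    have hsym3 : z ⬝ᵥ X₃ *ᵥ (Kᵀ *ᵥ u) = u ⬝ᵥ K *ᵥ (X₃ *ᵥ z) := by
      rw [dp_flip X₃ z (Kᵀ *ᵥ u), hX₃t, dp_tflip]
    have hzz : 0 ≤ z ⬝ᵥ X₃ *ᵥ z := by simpa using hX₃.posSemidef.dotProduct_mulVec_nonneg z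
    -- lower bound instance
    have hlow' : lam * (x ⬝ᵥ x + u ⬝ᵥ u) ≤ x ⬝ᵥ X₃ *ᵥ x + x ⬝ᵥ X₃ *ᵥ (Kᵀ *ᵥ u)
        + u ⬝ᵥ K *ᵥ (X₃ *ᵥ x) + c * (u ⬝ᵥ u) := by
      have h := hlow (Sum.elim x u)
      rw [sumElim_dotProduct_sumElim, Matrix.neg_mulVec, dotProduct_neg,
        quadT] at h
      linarith
    -- upper bound instance
    have hub : x ⬝ᵥ X₃ *ᵥ x + x ⬝ᵥ X₃ *ᵥ (Kᵀ *ᵥ u) + u ⬝ᵥ K *ᵥ (X₃ *ᵥ x)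
        + u ⬝ᵥ K *ᵥ (X₃ *ᵥ (Kᵀ *ᵥ u)) ≤ C * (x ⬝ᵥ x + u ⬝ᵥ u) := by
      have h := hC (Sum.elim x u)
      rw [sumElim_dotProduct_sumElim, quadB] at h
      exact h
    -- Cauchy-Schwarz-type fact
    have hcs : 0 ≤ (x + Kᵀ *ᵥ u - z) ⬝ᵥ X₃ *ᵥ (x + Kᵀ *ᵥ u - z) := by
      simpa using hX₃.posSemidef.dotProduct_mulVec_nonneg (x + Kᵀ *ᵥ u - z)
    simp only [Matrix.mulVec_sub, Matrix.mulVec_add, dotProduct_sub,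
      sub_dotProduct, dotProduct_add, add_dotProduct, dp_tflip] at hcs
    rcases eq_or_ne (Sum.elim x u) (0 : (Fin n ⊕ Fin m) → ℝ) with hw0 | hw0
    · -- x = 0 and u = 0, so z ≠ 0
      have hx0 : x = 0 := funext fun i => congrFun hw0 (Sum.inl i)
      have hu0 : u = 0 := funext fun j => congrFun hw0 (Sum.inr j)
      have hzne : z ≠ 0 := by
        intro h0
        apply hv
        rw [hveq, hx0, hu0, h0]
        funext i; rcases i with (i | j) | k <;> rfl
      have hzpos : 0 < z ⬝ᵥ X₃ *ᵥ z := by simpa using hX₃.dotProduct_mulVec_pos hzne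
      rw [hx0, hu0]
      simp only [zero_dotProduct, dotProduct_zero, Matrix.mulVec_zero]
      nlinarith [mul_pos hε0 hzpos]
    · have hxuu : 0 < x ⬝ᵥ x + u ⬝ᵥ u := by
        have h := dp_self_pos hw0
        rwa [sumElim_dotProduct_sumElim] at h
      have p1 : 0 ≤ 2 * ε₃ * ((x ⬝ᵥ X₃ *ᵥ x + x ⬝ᵥ X₃ *ᵥ (Kᵀ *ᵥ u) - x ⬝ᵥ X₃ *ᵥ z)
          + (u ⬝ᵥ K *ᵥ (X₃ *ᵥ x) + u ⬝ᵥ K *ᵥ (X₃ *ᵥ (Kᵀ *ᵥ u)) - u ⬝ᵥ K *ᵥ (X₃ *ᵥ z))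
          - (z ⬝ᵥ X₃ *ᵥ x + z ⬝ᵥ X₃ *ᵥ (Kᵀ *ᵥ u) - z ⬝ᵥ X₃ *ᵥ z)) := by
        have := mul_nonneg (by linarith : (0:ℝ) ≤ 2 * ε₃) hcs
        linarith [this]
      have p2 : 2 * ε₃ * (x ⬝ᵥ X₃ *ᵥ x + x ⬝ᵥ X₃ *ᵥ (Kᵀ *ᵥ u) + u ⬝ᵥ K *ᵥ (X₃ *ᵥ x)
          + u ⬝ᵥ K *ᵥ (X₃ *ᵥ (Kᵀ *ᵥ u))) ≤ 2 * ε₃ * (C * (x ⬝ᵥ x + u ⬝ᵥ u)) :=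
        mul_le_mul_of_nonneg_left hub (by linarith)
      have p3 : 2 * ε₃ * (C * (x ⬝ᵥ x + u ⬝ᵥ u)) ≤ 2 * ε₃ * (|C| * (x ⬝ᵥ x + u ⬝ᵥ u)) :=
        mul_le_mul_of_nonneg_left
          (mul_le_mul_of_nonneg_right (le_abs_self C) hxuu.le) (by linarith)
      have p4 : (2 * ε₃ * (|C| + 1)) * (x ⬝ᵥ x + u ⬝ᵥ u) ≤ lam * (x ⬝ᵥ x + u ⬝ᵥ u) :=
        mul_le_mul_of_nonneg_right hεlam hxuu.le
      have p5 : 0 ≤ 2 * ε₃ * (z ⬝ᵥ X₃ *ᵥ z) := mul_nonneg (by linarith) hzz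
      have p6 : 0 < 2 * ε₃ * (x ⬝ᵥ x + u ⬝ᵥ u) := mul_pos (by linarith) hxuu
      nlinarith [p1, p2, p3, p4, p5, p6, hlow', hsym1, hsym2, hsym3]
end
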